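/- There exists a universal constant C > 0 such that for all N, L ∈ ℕ there exists a ReLU feed-forward neural network φ of width at most 3N and depth at most L with sup_{x ∈ [0,1]} |φ(x) − x²| ≤ N^{−L}, and such that φ admits a representation all of whose parameters are bounded in absolute value by C·N. -/

import Mathlib

/-- Evaluation of a fully connected feed-forward ReLU network with input dimension `d`,
hidden width `W`, input affine map `(A₀, b₀)`, hidden affine maps `hidden`, and output
affine map `(Aout, bout)`; `ReLU(t) = max t 0` is applied componentwise after each
affine map except the last. -/
noncomputable def netEval {d W : ℕ} (A₀ : Matrix (Fin W) (Fin d) ℝ) (b₀ : Fin W → ℝ)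
    (hidden : List (Matrix (Fin W) (Fin W) ℝ × (Fin W → ℝ)))
    (Aout : Fin W → ℝ) (bout : ℝ) (x : Fin d → ℝ) : ℝ :=
  (∑ i, Aout i *
    (hidden.foldl (fun v p => fun i => max ((p.1.mulVec v + p.2) i) 0)
      (fun i => max ((A₀.mulVec x + b₀) i) 0)) i) + bout

/-- `IsReluNet f Wd Dp B`: the function `f : ℝ^d → ℝ` is realized by a fully connected
feed-forward ReLU network of width at most `Wd`, depth (number of hidden layers) at
most `Dp`, all of whose parameters (matrix entries and biases) are bounded in absolute
value by `B`. -/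
def IsReluNet {d : ℕ} (f : (Fin d → ℝ) → ℝ) (Wd Dp B : ℝ) : Prop :=
  ∃ (W : ℕ) (A₀ : Matrix (Fin W) (Fin d) ℝ) (b₀ : Fin W → ℝ)
    (hidden : List (Matrix (Fin W) (Fin W) ℝ × (Fin W → ℝ)))
    (Aout : Fin W → ℝ) (bout : ℝ),
    (W : ℝ) ≤ Wd ∧ ((hidden.length : ℝ) + 1) ≤ Dp ∧
    (∀ i j, |A₀ i j| ≤ B) ∧ (∀ i, |b₀ i| ≤ B) ∧
    (∀ p ∈ hidden, (∀ i j, |p.1 i j| ≤ B) ∧ (∀ i, |p.2 i| ≤ B)) ∧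
    (∀ i, |Aout i| ≤ B) ∧ |bout| ≤ B ∧
    ∀ x, f x = netEval A₀ b₀ hidden Aout bout x


noncomputable section
namespace SqApprox
open Finset

def relu (t : ℝ) : ℝ := max t 0

lemma relu_of_nonneg {t : ℝ} (h : 0 ≤ t) : relu t = t := max_eq_left h
lemma relu_of_nonpos {t : ℝ} (h : t ≤ 0) : relu t = 0 := max_eq_right h

def tcoef (N k : ℕ) : ℝ := if k = 0 then (N:ℝ) else (-1)^k * (2*(N:ℝ))
def dcoef (N k : ℕ) : ℝ := if k = 0 then 1 - 1/(N:ℝ) else -(2/(N:ℝ))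

def Tf (N : ℕ) (u : ℝ) : ℝ := ∑ k ∈ range N, tcoef N k * relu (u - k/(N:ℝ))
def Df (N : ℕ) (u : ℝ) : ℝ := ∑ k ∈ range N, dcoef N k * relu (u - k/(N:ℝ))

lemma sum_piece (N : ℕ) (c : ℕ → ℝ) {j : ℕ} (hj : j < N) {u : ℝ}
    (h1 : (j:ℝ)/N ≤ u) (h2 : u ≤ ((j:ℝ)+1)/N) :
    ∑ k ∈ range N, c k * relu (u - k/(N:ℝ)) = ∑ k ∈ range (j+1), c k * (u - k/(N:ℝ)) := by
  have hN0 : 0 < N := lt_of_le_of_lt (Nat.zero_le j) hj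
  have hn : (0:ℝ) < N := by exact_mod_cast hN0
  have e2 : ∀ k ∈ range N, k ∉ range (j+1) → c k * relu (u - k/(N:ℝ)) = 0 := by
    intro k _ hk
    rw [mem_range, not_lt] at hk
    have hk' : ((j:ℝ)+1) ≤ (k:ℝ) := by exact_mod_cast hk
    have : u - k/(N:ℝ) ≤ 0 := by
      have : ((j:ℝ)+1)/N ≤ (k:ℝ)/N := by gcongr
      linarith
    rw [relu_of_nonpos this, mul_zero]
  have e1 : ∀ k ∈ range (j+1), c k * relu (u - k/(N:ℝ)) = c k * (u - k/(N:ℝ)) := by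
    intro k hk
    rw [mem_range] at hk
    have hk' : (k:ℝ) ≤ (j:ℝ) := by exact_mod_cast Nat.lt_succ_iff.mp hk
    have : (0:ℝ) ≤ u - k/(N:ℝ) := by
      have : (k:ℝ)/N ≤ (j:ℝ)/N := by gcongr
      linarith
    rw [relu_of_nonneg this]
  calc ∑ k ∈ range N, c k * relu (u - k/(N:ℝ))
      = ∑ k ∈ range (j+1), c k * relu (u - k/(N:ℝ)) :=
        (Finset.sum_subset (Finset.range_subset_range.mpr hj) e2).symm
    _ = ∑ k ∈ range (j+1), c k * (u - k/(N:ℝ)) := Finset.sum_congr rfl e1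

lemma tsum_closed {N : ℕ} (hn : (N:ℝ) ≠ 0) (u : ℝ) (j : ℕ) :
    ∑ k ∈ range (j+1), tcoef N k * (u - k/(N:ℝ)) =
      if Even j then (N:ℝ)*u - j else ((j:ℝ)+1) - (N:ℝ)*u := by
  induction j with
  | zero => simp [tcoef]
  | succ m ih =>
      rw [Finset.sum_range_succ, ih]
      have ht : tcoef N (m+1) = (-1)^(m+1) * (2*(N:ℝ)) := by simp [tcoef]
      rcases Nat.even_or_odd m with hm | hm
      · rw [if_pos hm, if_neg (by simp [Nat.even_add_one, hm])]
        have : ((-1:ℝ))^(m+1) = -1 := (hm.add_one).neg_one_pow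
        rw [ht, this]
        push_cast
        field_simp
        ring
      · rw [if_neg (by simp [Nat.even_add_one, Nat.not_even_iff_odd.mpr hm]),
          if_pos (by simp [Nat.even_add_one, Nat.not_even_iff_odd.mpr hm])]
        have : ((-1:ℝ))^(m+1) = 1 := (hm.add_one).neg_one_pow
        rw [ht, this]
        push_cast
        field_simp
        ring

lemma dsum_closed {N : ℕ} (hn : (N:ℝ) ≠ 0) (u : ℝ) (j : ℕ) :
    ∑ k ∈ range (j+1), dcoef N k * (u - k/(N:ℝ)) =
      u - u/(N:ℝ) - 2*(j:ℝ)*u/(N:ℝ) + (j:ℝ)*((j:ℝ)+1)/(N:ℝ)^2 := by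
  induction j with
  | zero => simp [dcoef]; ring
  | succ m ih =>
      rw [Finset.sum_range_succ, ih]
      have : dcoef N (m+1) = -(2/(N:ℝ)) := by simp [dcoef]
      rw [this]
      push_cast
      field_simp
      ring

lemma exists_piece {N : ℕ} (hN : 1 ≤ N) {u : ℝ} (h0 : 0 ≤ u) (h1 : u ≤ 1) :
    ∃ j : ℕ, j < N ∧ (j:ℝ)/N ≤ u ∧ u ≤ ((j:ℝ)+1)/N := by
  have hn : (0:ℝ) < N := by exact_mod_cast hN
  by_cases hle : ⌊(N:ℝ)*u⌋₊ ≤ N-1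
  · refine ⟨⌊(N:ℝ)*u⌋₊, by omega, ?_, ?_⟩
    · rw [div_le_iff₀ hn]
      have := Nat.floor_le (by positivity : (0:ℝ) ≤ (N:ℝ)*u)
      linarith
    · rw [le_div_iff₀ hn]
      have := Nat.lt_floor_add_one ((N:ℝ)*u)
      linarith
  · refine ⟨N-1, by omega, ?_, ?_⟩
    · rw [div_le_iff₀ hn]
      have h2 : (N:ℝ)-1 ≤ ⌊(N:ℝ)*u⌋₊ := by
        have : N - 1 ≤ ⌊(N:ℝ)*u⌋₊ := by omega
        have := Nat.cast_le (α := ℝ) |>.mpr this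
        push_cast [Nat.cast_sub hN] at this ⊢
        linarith
      have h3 := Nat.floor_le (by positivity : (0:ℝ) ≤ (N:ℝ)*u)
      have : ((N-1:ℕ):ℝ) = (N:ℝ)-1 := by push_cast [Nat.cast_sub hN]; ring
      rw [this]
      linarith
    · rw [le_div_iff₀ hn]
      have : ((N-1:ℕ):ℝ) = (N:ℝ)-1 := by push_cast [Nat.cast_sub hN]; ring
      rw [this]
      nlinarith

lemma key {N : ℕ} (hN : 1 ≤ N) {u : ℝ} (h0 : 0 ≤ u) (h1 : u ≤ 1) :
    0 ≤ Tf N u ∧ Tf N u ≤ 1 ∧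
    Df N u = (u - u^2) - (Tf N u - (Tf N u)^2)/(N:ℝ)^2 ∧ 0 ≤ Df N u := by
  have hn : (0:ℝ) < N := by exact_mod_cast hN
  obtain ⟨j, hj, hju, huj⟩ := exists_piece hN h0 h1
  have hjn : (j:ℝ) + 1 ≤ (N:ℝ) := by exact_mod_cast hj
  have hju' : (j:ℝ) ≤ (N:ℝ)*u := by rw [div_le_iff₀ hn] at hju; linarith
  have huj' : (N:ℝ)*u ≤ (j:ℝ)+1 := by rw [le_div_iff₀ hn] at huj; linarith
  have hTf := (sum_piece N (tcoef N) hj hju huj).trans (tsum_closed hn.ne' u j)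
  have hDf := (sum_piece N (dcoef N) hj hju huj).trans (dsum_closed hn.ne' u j)
  rw [show (∑ k ∈ range N, tcoef N k * relu (u - k/(N:ℝ))) = Tf N u from rfl] at hTf
  rw [show (∑ k ∈ range N, dcoef N k * relu (u - k/(N:ℝ))) = Df N u from rfl] at hDf
  have hj0 : (0:ℝ) ≤ j := Nat.cast_nonneg j
  rcases Nat.even_or_odd j with hm | hm
  · rw [if_pos hm] at hTf
    refine ⟨by linarith [hTf], by linarith [hTf], ?_, ?_⟩
    · rw [hTf, hDf]; field_simp; ring
    · have key1 : 0 ≤ (1 - ((N:ℝ)*u - j)) * ((j:ℝ) * ((N:ℝ) - j)) :=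
        mul_nonneg (by linarith) (mul_nonneg hj0 (by linarith))
      have key2 : 0 ≤ ((N:ℝ)*u - j) * (((j:ℝ)+1) * ((N:ℝ) - j - 1)) :=
        mul_nonneg (by linarith) (mul_nonneg (by linarith) (by linarith))
      have hne : (0:ℝ) < (N:ℝ)^2 := by positivity
      have hsum : (N:ℝ)^2 * Df N u =
          (1 - ((N:ℝ)*u - j)) * ((j:ℝ) * ((N:ℝ) - j)) +
          ((N:ℝ)*u - j) * (((j:ℝ)+1) * ((N:ℝ) - j - 1)) := by
        rw [hDf]; field_simp; ring
      have h2 : (N:ℝ)^2 * 0 ≤ (N:ℝ)^2 * Df N u := by rw [mul_zero, hsum]; linarith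
      exact (mul_le_mul_iff_right₀ hne).mp h2
  · rw [if_neg (Nat.not_even_iff_odd.mpr hm)] at hTf
    refine ⟨by linarith [hTf], by linarith [hTf], ?_, ?_⟩
    · rw [hTf, hDf]; field_simp; ring
    · have key1 : 0 ≤ (1 - ((N:ℝ)*u - j)) * ((j:ℝ) * ((N:ℝ) - j)) :=
        mul_nonneg (by linarith) (mul_nonneg hj0 (by linarith))
      have key2 : 0 ≤ ((N:ℝ)*u - j) * (((j:ℝ)+1) * ((N:ℝ) - j - 1)) :=
        mul_nonneg (by linarith) (mul_nonneg (by linarith) (by linarith))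
      have hne : (0:ℝ) < (N:ℝ)^2 := by positivity
      have hsum : (N:ℝ)^2 * Df N u =
          (1 - ((N:ℝ)*u - j)) * ((j:ℝ) * ((N:ℝ) - j)) +
          ((N:ℝ)*u - j) * (((j:ℝ)+1) * ((N:ℝ) - j - 1)) := by
        rw [hDf]; field_simp; ring
      have h2 : (N:ℝ)^2 * 0 ≤ (N:ℝ)^2 * Df N u := by rw [mul_zero, hsum]; linarith
      exact (mul_le_mul_iff_right₀ hne).mp h2

def useq (N : ℕ) (x : ℝ) : ℕ → ℝ
  | 0 => x
  | s+1 => Tf N (useq N x s)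

def Ssum (N : ℕ) (x : ℝ) (s : ℕ) : ℝ :=
  ∑ t ∈ range s, (1/(N:ℝ)^2)^t * Df N (useq N x t)

lemma useq_mem {N : ℕ} (hN : 1 ≤ N) {x : ℝ} (h0 : 0 ≤ x) (h1 : x ≤ 1) (s : ℕ) :
    0 ≤ useq N x s ∧ useq N x s ≤ 1 := by
  induction s with
  | zero => exact ⟨h0, h1⟩
  | succ m ih =>
      obtain ⟨a, b, _, _⟩ := key hN ih.1 ih.2
      exact ⟨a, b⟩

lemma Ssum_nonneg {N : ℕ} (hN : 1 ≤ N) {x : ℝ} (h0 : 0 ≤ x) (h1 : x ≤ 1) (s : ℕ) :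
    0 ≤ Ssum N x s := by
  apply Finset.sum_nonneg
  intro t _
  obtain ⟨a, b⟩ := useq_mem hN h0 h1 t
  obtain ⟨_, _, _, hD⟩ := key hN a b
  positivity

lemma Ssum_succ (N : ℕ) (x : ℝ) (s : ℕ) :
    Ssum N x (s+1) = Ssum N x s + (1/(N:ℝ)^2)^s * Df N (useq N x s) :=
  Finset.sum_range_succ _ _

lemma telescope {N : ℕ} (hN : 1 ≤ N) {x : ℝ} (h0 : 0 ≤ x) (h1 : x ≤ 1) (L : ℕ) :
    Ssum N x L = (x - x^2) - (1/(N:ℝ)^2)^L * (useq N x L - (useq N x L)^2) := by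
  have hn : (0:ℝ) < N := by exact_mod_cast hN
  induction L with
  | zero => simp [Ssum, useq]
  | succ m ih =>
      rw [Ssum_succ, ih]
      obtain ⟨a, b⟩ := useq_mem hN h0 h1 m
      obtain ⟨_, _, hD, _⟩ := key hN a b
      rw [hD]
      have : useq N x (m+1) = Tf N (useq N x m) := rfl
      rw [this]
      have hne : ((N:ℝ)^2) ≠ 0 := by positivity
      ring

def A0N (N k : ℕ) : ℝ := if k = N+1 then 0 else 1
def bN (N k : ℕ) : ℝ := if k < N then -((k:ℝ)/(N:ℝ)) else 0
def MhN (N p i j : ℕ) : ℝ :=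
  if i < N then (if j < N then tcoef N j else 0)
  else if i = N then (if j = N then 1 else 0)
  else if j < N then (1/(N:ℝ)^2)^p * dcoef N j
  else if j = N+1 then 1 else 0
def AoutN (N L k : ℕ) : ℝ :=
  if k < N then -((1/(N:ℝ)^2)^(L-1) * dcoef N k) else if k = N then 1 else -1
def stN (N : ℕ) (x : ℝ) (s k : ℕ) : ℝ :=
  if k < N then relu (useq N x s - (k:ℝ)/(N:ℝ)) else if k = N then x else Ssum N x s

def A0M (N : ℕ) : Matrix (Fin (N+2)) (Fin 1) ℝ := fun i _ => A0N N (i:ℕ)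
def bV (N : ℕ) : Fin (N+2) → ℝ := fun i => bN N (i:ℕ)
def MhM (N p : ℕ) : Matrix (Fin (N+2)) (Fin (N+2)) ℝ := fun i j => MhN N p (i:ℕ) (j:ℕ)
def AoutV (N L : ℕ) : Fin (N+2) → ℝ := fun i => AoutN N L (i:ℕ)
def stV (N : ℕ) (x : ℝ) (s : ℕ) : Fin (N+2) → ℝ := fun i => stN N x s (i:ℕ)

lemma sum_split (N : ℕ) (f : ℕ → ℝ) :
    ∑ j : Fin (N+2), f (j:ℕ) = (∑ k ∈ range N, f k) + f N + f (N+1) := by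
  rw [Fin.sum_univ_eq_sum_range, Finset.sum_range_succ, Finset.sum_range_succ]

lemma init_eq {N : ℕ} {x : ℝ} (h0 : 0 ≤ x) :
    (fun i => max (((A0M N).mulVec (fun _ => x) + bV N) i) 0) = stV N x 0 := by
  funext i
  have hmv : (A0M N).mulVec (fun _ => x) i = A0N N (i:ℕ) * x := by
    simp [Matrix.mulVec, dotProduct, A0M]
  have hi2 := i.isLt
  by_cases h1 : (i:ℕ) < N
  · have : A0N N (i:ℕ) = 1 := by simp [A0N]; omega
    simp only [Pi.add_apply, hmv, this, stV, stN, bV, bN, if_pos h1, one_mul]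
    rfl
  · by_cases h2 : (i:ℕ) = N
    · have : A0N N (i:ℕ) = 1 := by simp [A0N]; omega
      simp only [Pi.add_apply, hmv, this, stV, stN, bV, bN, if_neg h1, if_pos h2, one_mul]
      rw [add_zero]
      exact relu_of_nonneg h0
    · have h3 : (i:ℕ) = N+1 := by omega
      have : A0N N (i:ℕ) = 0 := by simp [A0N, h3]
      simp only [Pi.add_apply, hmv, this, stV, stN, bV, bN, if_neg h1, if_neg h2, zero_mul,
        add_zero]
      simp [Ssum, h3]

lemma step_eq {N : ℕ} (hN : 1 ≤ N) {x : ℝ} (h0 : 0 ≤ x) (h1 : x ≤ 1) (p : ℕ) :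
    (fun i => max (((MhM N p).mulVec (stV N x p) + bV N) i) 0) = stV N x (p+1) := by
  funext i
  have hmv : (MhM N p).mulVec (stV N x p) i
      = ∑ j : Fin (N+2), (fun k => MhN N p (i:ℕ) k * stN N x p k) (j:ℕ) := by
    simp [Matrix.mulVec, dotProduct, MhM, stV]
  rw [show ((MhM N p).mulVec (stV N x p) + bV N) i
      = (MhM N p).mulVec (stV N x p) i + bV N i from rfl, hmv,
    sum_split N (fun k => MhN N p (i:ℕ) k * stN N x p k)]
  have hi2 := i.isLt
  by_cases hi : (i:ℕ) < N
  · have hsum : ∑ k ∈ range N, MhN N p (i:ℕ) k * stN N x p k = Tf N (useq N x p) := by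
      apply Finset.sum_congr rfl
      intro k hk
      rw [mem_range] at hk
      simp [MhN, stN, if_pos hi, if_pos hk]
    have hN' : ¬ (N < N) := lt_irrefl N
    have hN1 : ¬ (N+1 < N) := by omega
    rw [hsum]
    simp only [MhN, if_pos hi, if_neg hN', if_neg hN1, zero_mul, add_zero]
    simp only [stV, stN, bV, bN, if_pos hi]
    rfl
  · by_cases hi' : (i:ℕ) = N
    · have hsum : ∑ k ∈ range N, MhN N p (i:ℕ) k * stN N x p k = 0 := by
        apply Finset.sum_eq_zero
        intro k hk
        rw [mem_range] at hk
        simp [MhN, hi', hi, hk.ne, if_neg (by omega : ¬ (N < N))]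
      rw [hsum]
      have e1 : MhN N p (i:ℕ) N = 1 := by simp [MhN, hi', if_neg (by omega : ¬ (N < N))]
      have e2 : MhN N p (i:ℕ) (N+1) = 0 := by
        simp [MhN, hi, hi']
      rw [e1, e2, zero_mul, add_zero, zero_add, one_mul]
      simp only [stV, stN, bV, bN, if_neg hi, if_pos hi',
        if_neg (by omega : ¬ (N < N))]
      rw [add_zero]
      exact relu_of_nonneg h0
    · have hi3 : (i:ℕ) = N+1 := by omega
      have hsum : ∑ k ∈ range N, MhN N p (i:ℕ) k * stN N x p k
          = (1/(N:ℝ)^2)^p * Df N (useq N x p) := by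
        rw [Df, Finset.mul_sum]
        apply Finset.sum_congr rfl
        intro k hk
        rw [mem_range] at hk
        simp [MhN, stN, hi3, if_pos hk, if_neg (by omega : ¬ (N+1 < N)),
          if_neg (by omega : ¬ (N+1 = N))]
        ring
      have e1 : MhN N p (i:ℕ) N = 0 := by
        simp only [MhN, hi3, if_neg (by omega : ¬ (N+1 < N)), if_neg (by omega : ¬ (N+1 = N)),
          if_neg (by omega : ¬ (N < N)), if_neg (by omega : ¬ (N = N+1))]
      have e2 : MhN N p (i:ℕ) (N+1) = 1 := by
        simp [MhN, hi3, if_neg (by omega : ¬ (N+1 < N)), if_neg (by omega : ¬ (N+1 = N))]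
      rw [hsum, e1, e2, zero_mul, add_zero, one_mul]
      have hst : stN N x p (N+1) = Ssum N x p := by
        simp [stN, if_neg (by omega : ¬ (N+1 < N)), if_neg (by omega : ¬ (N+1 = N))]
      rw [hst]
      simp only [stV, stN, bV, bN, hi3, if_neg (by omega : ¬ (N+1 < N)),
        if_neg (by omega : ¬ (N+1 = N)), add_zero]
      rw [add_comm, ← Ssum_succ]
      exact relu_of_nonneg (Ssum_nonneg hN h0 h1 (p+1))

def hiddenList (N m : ℕ) : List (Matrix (Fin (N+2)) (Fin (N+2)) ℝ × (Fin (N+2) → ℝ)) :=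
  (List.range m).map (fun p => (MhM N p, bV N))

lemma fold_eq {N : ℕ} (hN : 1 ≤ N) {x : ℝ} (h0 : 0 ≤ x) (h1 : x ≤ 1) (m : ℕ) :
    (hiddenList N m).foldl (fun v p => fun i => max ((p.1.mulVec v + p.2) i) 0)
      (stV N x 0) = stV N x m := by
  induction m with
  | zero => rfl
  | succ k ih =>
      rw [hiddenList, List.range_succ, List.map_append, List.foldl_append]
      rw [show (List.range k).map (fun p => (MhM N p, bV N)) = hiddenList N k from rfl, ih]
      simp only [List.map_cons, List.map_nil, List.foldl_cons, List.foldl_nil]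
      exact step_eq hN h0 h1 k

lemma out_eq {N : ℕ} (hN : 1 ≤ N) {x : ℝ} (h0 : 0 ≤ x) (h1 : x ≤ 1) {L : ℕ} (hL : 1 ≤ L) :
    ∑ i : Fin (N+2), AoutV N L i * stV N x (L-1) i = x - Ssum N x L := by
  have := sum_split N (fun k => AoutN N L k * stN N x (L-1) k)
  rw [show (∑ i : Fin (N+2), AoutV N L i * stV N x (L-1) i)
    = ∑ j : Fin (N+2), (fun k => AoutN N L k * stN N x (L-1) k) (j:ℕ) from rfl, this]
  have hsum : ∑ k ∈ range N, AoutN N L k * stN N x (L-1) k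
      = -((1/(N:ℝ)^2)^(L-1) * Df N (useq N x (L-1))) := by
    rw [Df, Finset.mul_sum, ← Finset.sum_neg_distrib]
    apply Finset.sum_congr rfl
    intro k hk
    rw [mem_range] at hk
    simp only [AoutN, stN, if_pos hk]
    ring
  have e1 : AoutN N L N * stN N x (L-1) N = x := by
    simp [AoutN, stN, if_neg (by omega : ¬ (N < N))]
  have e2 : AoutN N L (N+1) * stN N x (L-1) (N+1) = -Ssum N x (L-1) := by
    simp [AoutN, stN, if_neg (by omega : ¬ (N+1 < N)), if_neg (by omega : ¬ (N+1 = N))]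
  rw [hsum, e1, e2]
  have : Ssum N x L = Ssum N x (L-1) + (1/(N:ℝ)^2)^(L-1) * Df N (useq N x (L-1)) := by
    conv_lhs => rw [show L = (L-1)+1 by omega]
    exact Ssum_succ N x (L-1)
  rw [this]
  ring

lemma net_value {N : ℕ} (hN : 1 ≤ N) {x : ℝ} (h0 : 0 ≤ x) (h1 : x ≤ 1) {L : ℕ} (hL : 1 ≤ L) :
    netEval (A0M N) (bV N) (hiddenList N (L-1)) (AoutV N L) 0 (fun _ => x)
      = x - Ssum N x L := by
  rw [netEval, init_eq h0, fold_eq hN h0 h1 (L-1), add_zero]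
  exact out_eq hN h0 h1 hL

lemma abs_tcoef {N : ℕ} (hN : 1 ≤ N) (k : ℕ) : |tcoef N k| ≤ 2*(N:ℝ) := by
  have hn : (1:ℝ) ≤ N := by exact_mod_cast hN
  unfold tcoef
  split
  · rw [abs_of_nonneg (by linarith)]; linarith
  · rw [abs_mul, abs_pow, abs_neg, abs_one, one_pow, one_mul,
      abs_of_nonneg (by linarith)]

lemma abs_dcoef {N : ℕ} (hN : 1 ≤ N) (k : ℕ) : |dcoef N k| ≤ 2*(N:ℝ) := by
  have hn : (1:ℝ) ≤ N := by exact_mod_cast hN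
  have hpos : (0:ℝ) < 1/(N:ℝ) := by positivity
  have hle : 1/(N:ℝ) ≤ 1 := by rw [div_le_one (by linarith)]; linarith
  unfold dcoef
  split
  · rw [abs_le]; constructor <;> nlinarith
  · rw [abs_neg, abs_of_nonneg (by positivity)]
    rw [div_le_iff₀ (by linarith : (0:ℝ) < N)]
    nlinarith

lemma abs_powfac {N : ℕ} (hN : 1 ≤ N) (p : ℕ) : |(1/(N:ℝ)^2)^p| ≤ 1 := by
  have hn : (1:ℝ) ≤ N := by exact_mod_cast hN
  rw [abs_of_nonneg (by positivity)]
  apply pow_le_one₀ (by positivity)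
  rw [div_le_one (by positivity)]
  nlinarith

lemma abs_MhN {N : ℕ} (hN : 1 ≤ N) (p i j : ℕ) : |MhN N p i j| ≤ 2*(N:ℝ) := by
  have hn : (1:ℝ) ≤ N := by exact_mod_cast hN
  have h1 : |(1:ℝ)| ≤ 2*(N:ℝ) := by rw [abs_one]; linarith
  have h0 : |(0:ℝ)| ≤ 2*(N:ℝ) := by rw [abs_zero]; linarith
  unfold MhN
  split
  · split
    · exact abs_tcoef hN j
    · exact h0
  · split
    · split
      · exact h1
      · exact h0
    · split
      · calc |(1/(N:ℝ)^2)^p * dcoef N j| = |(1/(N:ℝ)^2)^p| * |dcoef N j| := abs_mul _ _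
          _ ≤ 1 * (2*(N:ℝ)) :=
            mul_le_mul (abs_powfac hN p) (abs_dcoef hN j) (abs_nonneg _) one_pos.le
          _ = 2*(N:ℝ) := one_mul _
      · split
        · exact h1
        · exact h0

lemma abs_AoutN {N : ℕ} (hN : 1 ≤ N) (L k : ℕ) : |AoutN N L k| ≤ 2*(N:ℝ) := by
  have hn : (1:ℝ) ≤ N := by exact_mod_cast hN
  unfold AoutN
  split
  · rw [abs_neg]
    calc |(1/(N:ℝ)^2)^(L-1) * dcoef N k| = |(1/(N:ℝ)^2)^(L-1)| * |dcoef N k| := abs_mul _ _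
      _ ≤ 1 * (2*(N:ℝ)) :=
        mul_le_mul (abs_powfac hN _) (abs_dcoef hN k) (abs_nonneg _) one_pos.le
      _ = 2*(N:ℝ) := one_mul _
  · split
    · rw [abs_one]; linarith
    · rw [abs_neg, abs_one]; linarith

lemma abs_A0N {N : ℕ} (hN : 1 ≤ N) (k : ℕ) : |A0N N k| ≤ 2*(N:ℝ) := by
  have hn : (1:ℝ) ≤ N := by exact_mod_cast hN
  unfold A0N
  split
  · rw [abs_zero]; linarith
  · rw [abs_one]; linarith

lemma abs_bN {N : ℕ} (hN : 1 ≤ N) (k : ℕ) : |bN N k| ≤ 2*(N:ℝ) := by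
  have hn : (1:ℝ) ≤ N := by exact_mod_cast hN
  unfold bN
  split
  · next h =>
    have hk : (k:ℝ) < N := by exact_mod_cast h
    rw [abs_neg, abs_of_nonneg (by positivity)]
    rw [div_le_iff₀ (by linarith : (0:ℝ) < N)]
    nlinarith [Nat.cast_nonneg (α := ℝ) k]
  · rw [abs_zero]; linarith

theorem main :
    ∃ C : ℝ, 0 < C ∧
      ∀ N L : ℕ, 1 ≤ N → 1 ≤ L →
        ∃ φ : (Fin 1 → ℝ) → ℝ,
          IsReluNet φ (3 * (N : ℝ)) (L : ℝ) (C * (N : ℝ)) ∧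
          ∀ x : ℝ, x ∈ Set.Icc (0 : ℝ) 1 →
            |φ (fun _ => x) - x ^ 2| ≤ (N : ℝ) ^ (-(L : ℝ)) := by
  refine ⟨2, by norm_num, ?_⟩
  intro N L hN hL
  have hn : (1:ℝ) ≤ N := by exact_mod_cast hN
  refine ⟨netEval (A0M N) (bV N) (hiddenList N (L-1)) (AoutV N L) 0, ?_, ?_⟩
  · refine ⟨N+2, A0M N, bV N, hiddenList N (L-1), AoutV N L, 0, ?_, ?_, ?_, ?_, ?_, ?_, ?_, ?_⟩
    · push_cast; linarith
    · rw [hiddenList, List.length_map, List.length_range]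
      rw [Nat.cast_sub hL]
      norm_num
    · intro i j; exact abs_A0N hN (i:ℕ)
    · intro i; exact abs_bN hN (i:ℕ)
    · intro q hq
      rw [hiddenList, List.mem_map] at hq
      obtain ⟨p, _, rfl⟩ := hq
      exact ⟨fun i j => abs_MhN hN p (i:ℕ) (j:ℕ), fun i => abs_bN hN (i:ℕ)⟩
    · intro i; exact abs_AoutN hN L (i:ℕ)
    · rw [abs_zero]; linarith
    · intro x; rfl
  · intro x hx
    obtain ⟨h0, h1⟩ := hx
    rw [net_value hN h0 h1 hL, telescope hN h0 h1 L]
    set u := useq N x L with hu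
    obtain ⟨hu0, hu1⟩ := useq_mem hN h0 h1 L
    have hq0 : 0 ≤ u - u^2 := by nlinarith
    have hq1 : u - u^2 ≤ 1/4 := by nlinarith [sq_nonneg (u - 1/2)]
    have hfac0 : (0:ℝ) ≤ (1/(N:ℝ)^2)^L := by positivity
    have e : x - ((x - x^2) - (1/(N:ℝ)^2)^L * (u - u^2)) - x^2
        = (1/(N:ℝ)^2)^L * (u - u^2) := by ring
    rw [e, abs_of_nonneg (mul_nonneg hfac0 hq0)]
    have step1 : (1/(N:ℝ)^2)^L * (u - u^2) ≤ (1/(N:ℝ))^L := by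
      have h2 : (1/(N:ℝ)^2)^L ≤ (1/(N:ℝ))^L := by
        apply pow_le_pow_left₀ (by positivity)
        rw [div_le_div_iff₀ (by positivity) (by linarith)]
        nlinarith
      nlinarith [pow_nonneg (by positivity : (0:ℝ) ≤ 1/(N:ℝ)) L]
    have step2 : (1/(N:ℝ))^L = (N:ℝ) ^ (-(L:ℝ)) := by
      rw [Real.rpow_neg (by linarith), Real.rpow_natCast, one_div, inv_pow]
    linarith [step1, step2.le]

end SqApprox
end

/-- For all `N, L ≥ 1` there is a ReLU network of width at most `3N`
and depth at most `L` approximating `x ↦ x²` on `[0,1]` with error `N^{-L}`, whose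
parameters are bounded in absolute value by `C·N` for a universal constant `C > 0`. -/
theorem square_approximation_bounded_parameters :
    ∃ C : ℝ, 0 < C ∧
      ∀ N L : ℕ, 1 ≤ N → 1 ≤ L →
        ∃ φ : (Fin 1 → ℝ) → ℝ,
          IsReluNet φ (3 * (N : ℝ)) (L : ℝ) (C * (N : ℝ)) ∧
          ∀ x : ℝ, x ∈ Set.Icc (0 : ℝ) 1 →
            |φ (fun _ => x) - x ^ 2| ≤ (N : ℝ) ^ (-(L : ℝ)) := by
  exact SqApprox.main
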